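/- If a simple graph G is well-covered with independence number equal to |V(G)|/2 (very well-covered), then G has a perfect matching. -/

import Mathlib

set_option linter.unusedSectionVars false


open Relation

/-- `C` is a vertex cover of `G`. -/
def IsVC {V : Type*} (G : SimpleGraph V) (C : Set V) : Prop :=
  ∀ ⦃u v : V⦄, G.Adj u v → u ∈ C ∨ v ∈ C

/-- `C` is a minimal vertex cover of `G`. -/
def IsMinVC {V : Type*} (G : SimpleGraph V) (C : Set V) : Prop :=
  IsVC G C ∧ ∀ D : Set V, IsVC G D → D ⊆ C → D = C

/-- `S` is an independent set of `G`. -/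
def IsIndep {V : Type*} (G : SimpleGraph V) (S : Set V) : Prop :=
  ∀ u ∈ S, ∀ v ∈ S, ¬ G.Adj u v

/-- `S` is a maximal independent set of `G`. -/
def IsMaxIndep {V : Type*} (G : SimpleGraph V) (S : Set V) : Prop :=
  IsIndep G S ∧ ∀ T : Set V, IsIndep G T → S ⊆ T → T = S

/-- `G` has no isolated vertices. -/
def NoIsolated {V : Type*} (G : SimpleGraph V) : Prop := ∀ v, ∃ w, G.Adj v w

/-- The vertex set `{x_1,...,x_n} ∪ {y_1,...,y_n}`: `xv i = Sum.inl i`, `yv i = Sum.inr i`. -/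
abbrev Vtx (n : ℕ) := Fin n ⊕ Fin n

def xv {n : ℕ} (i : Fin n) : Vtx n := Sum.inl i
def yv {n : ℕ} (i : Fin n) : Vtx n := Sum.inr i

/-- Condition (∗): X is a minimal vertex cover, Y is a maximal independent set,
and `x_i y_i` is an edge for every `i`. -/
def StarCond {n : ℕ} (G : SimpleGraph (Vtx n)) : Prop :=
  IsMinVC G (Set.range xv) ∧ IsMaxIndep G (Set.range yv) ∧ ∀ i, G.Adj (xv i) (yv i)

/-- Condition (∗∗): `x_i y_j ∈ E(G)` implies `i ≤ j`. -/
def StarStarCond {n : ℕ} (G : SimpleGraph (Vtx n)) : Prop :=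
  ∀ i j : Fin n, G.Adj (xv i) (yv j) → i ≤ j

/-- Condition (i): for distinct `i,j,k` and `z_i ∈ {x_i,y_i}`, if `z_i x_j` and `y_j x_k`
are edges then so is `z_i x_k`. -/
def CondI {n : ℕ} (G : SimpleGraph (Vtx n)) : Prop :=
  ∀ i j k : Fin n, i ≠ j → j ≠ k → i ≠ k →
    ∀ z ∈ ({xv i, yv i} : Set (Vtx n)),
      G.Adj z (xv j) → G.Adj (yv j) (xv k) → G.Adj z (xv k)

/-- Condition (ii): `x_i y_j ∈ E(G)` implies `x_i x_j ∉ E(G)`. -/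
def CondII {n : ℕ} (G : SimpleGraph (Vtx n)) : Prop :=
  ∀ i j : Fin n, G.Adj (xv i) (yv j) → ¬ G.Adj (xv i) (xv j)

/-- The minimum vertex cover size of `G` (the height of the edge ideal) is at least `n`. -/
def HeightN {n : ℕ} (G : SimpleGraph (Vtx n)) : Prop :=
  ∀ C : Finset (Vtx n), IsVC G ↑C → n ≤ C.card

/-- Directed edge `i → j` of the semidirected graph `𝔡_G`. -/
def dirEdge {n : ℕ} (G : SimpleGraph (Vtx n)) (i j : Fin n) : Prop :=
  i ≠ j ∧ G.Adj (xv i) (yv j)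

/-- Undirected edge `ij` of the semidirected graph `𝔡_G`. -/
def undirEdge {n : ℕ} (G : SimpleGraph (Vtx n)) (i j : Fin n) : Prop :=
  G.Adj (xv i) (xv j)



section Aux

variable {V : Type*} [Fintype V] [DecidableEq V] (G : SimpleGraph V) [DecidableRel G.Adj]

lemma isIndep_mono {S T : Set V} (h : IsIndep G T) (hsub : S ⊆ T) : IsIndep G S :=
  fun u hu v hv => h u (hsub hu) v (hsub hv)

lemma exists_maxIndep_superset (I : Finset V) (hI : IsIndep G ↑I) :
    ∃ T : Finset V, I ⊆ T ∧ IsMaxIndep G ↑T := by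
  classical
  let 𝒮 : Finset (Finset V) := Finset.univ.filter (fun J => I ⊆ J ∧ IsIndep G ↑J)
  have hne : 𝒮.Nonempty := ⟨I, by simp [𝒮, hI]⟩
  obtain ⟨T, hT𝒮, hTmax⟩ := 𝒮.exists_max_image (fun J => J.card) hne
  have hT : I ⊆ T ∧ IsIndep G ↑T := by
    simpa [𝒮] using hT𝒮
  refine ⟨T, hT.1, hT.2, fun T' hT' hsub => ?_⟩
  have hfin : T'.Finite := Set.toFinite T'
  have hTsubF : T ⊆ hfin.toFinset := by
    intro x hx
    exact hfin.mem_toFinset.mpr (hsub hx)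
  have hmem : hfin.toFinset ∈ 𝒮 := by
    simp only [𝒮, Finset.mem_filter, Finset.mem_univ, true_and]
    refine ⟨hT.1.trans hTsubF, ?_⟩
    rwa [hfin.coe_toFinset]
  have hcard := hTmax _ hmem
  have heq : hfin.toFinset = T := Finset.eq_of_subset_of_card_le hTsubF hcard |>.symm
  calc T' = ↑hfin.toFinset := hfin.coe_toFinset.symm
    _ = ↑T := by rw [heq]

variable (hvwc : ∀ S : Finset V, IsMaxIndep G ↑S → 2 * S.card = Fintype.card V)

include hvwc in
lemma indep_two_mul_card_le (I : Finset V) (hI : IsIndep G ↑I) :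
    2 * I.card ≤ Fintype.card V := by
  obtain ⟨T, hsub, hT⟩ := exists_maxIndep_superset G I hI
  calc 2 * I.card ≤ 2 * T.card := by
        have := Finset.card_le_card hsub; omega
    _ = Fintype.card V := hvwc T hT

include hvwc in
lemma key_card_le :
    ∀ (B A : Finset V), IsIndep G ↑A → Disjoint A B →
      (∀ a ∈ A, (G.neighborFinset a).Nonempty) →
      (∀ a ∈ A, G.neighborFinset a ⊆ B) → A.card ≤ B.card := by
  classical
  intro B
  induction B using Finset.strongInduction with
  | _ B ih =>
    intro A hA hdisj hne hsub
    rcases A.eq_empty_or_nonempty with rfl | ⟨a₀, ha₀⟩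
    · simp
    obtain ⟨b₀, hb₀⟩ := hne a₀ ha₀
    have hb₀B : b₀ ∈ B := hsub a₀ ha₀ hb₀
    have hind₀ : IsIndep G ↑({b₀} : Finset V) := by
      intro u hu v hv
      simp only [Finset.coe_singleton, Set.mem_singleton_iff] at hu hv
      subst hu; subst hv
      exact fun h => G.loopless.irrefl _ h
    obtain ⟨T, hsubT, hTmax⟩ := exists_maxIndep_superset G {b₀} hind₀
    have hTind : IsIndep G ↑T := hTmax.1
    have hTcard : 2 * T.card = Fintype.card V := hvwc T hTmax
    set E := T ∩ B with hE
    have hET : E ⊆ T := Finset.inter_subset_left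
    have hEB : E ⊆ B := Finset.inter_subset_right
    have hb₀E : b₀ ∈ E := Finset.mem_inter.mpr ⟨hsubT (Finset.mem_singleton_self b₀), hb₀B⟩
    -- cross adjacency impossible
    have cross : ∀ a ∈ A, ∀ t ∈ T, t ∉ E → ¬ G.Adj a t := by
      intro a ha t htT htE hadj
      have : t ∈ G.neighborFinset a := (SimpleGraph.mem_neighborFinset G a t).mpr hadj
      exact htE (Finset.mem_inter.mpr ⟨htT, hsub a ha this⟩)
    -- the swap set is independent
    have hswap : IsIndep G ↑((T \ E) ∪ A) := by
      intro u hu v hv hadj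
      simp only [Finset.coe_union, Set.mem_union, Finset.mem_coe, Finset.mem_sdiff] at hu hv
      rcases hu with ⟨huT, huE⟩ | huA
      · rcases hv with ⟨hvT, hvE⟩ | hvA
        · exact hTind u (Finset.mem_coe.mpr huT) v (Finset.mem_coe.mpr hvT) hadj
        · exact cross v hvA u huT huE hadj.symm
      · rcases hv with ⟨hvT, hvE⟩ | hvA
        · exact cross u huA v hvT hvE hadj
        · exact hA u (Finset.mem_coe.mpr huA) v (Finset.mem_coe.mpr hvA) hadj
    have hcard' : 2 * ((T \ E) ∪ A).card ≤ Fintype.card V :=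
      indep_two_mul_card_le G hvwc _ hswap
    -- lower bound for the union's cardinality
    have hd : Disjoint (T \ E) (A \ T) := by
      rw [Finset.disjoint_left]
      intro x hx hx'
      exact (Finset.mem_sdiff.mp hx').2 (Finset.mem_sdiff.mp hx).1
    have hsub2 : (T \ E) ∪ (A \ T) ⊆ (T \ E) ∪ A :=
      Finset.union_subset_union_right (Finset.sdiff_subset)
    have hlow : (T \ E).card + (A \ T).card ≤ ((T \ E) ∪ A).card := by
      rw [← Finset.card_union_of_disjoint hd]
      exact Finset.card_le_card hsub2
    have hTE : (T \ E).card + E.card = T.card := Finset.card_sdiff_add_card_eq_card hET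
    have hkey1 : (A \ T).card ≤ E.card := by omega
    -- the vertices of A adjacent to E are outside T
    set A' := A.filter (fun a => ∀ e ∈ E, ¬ G.Adj a e) with hA'
    have hAsplit : A'.card + (A.filter (fun a => ¬ ∀ e ∈ E, ¬ G.Adj a e)).card = A.card :=
      Finset.card_filter_add_card_filter_not _
    have hbad : A.filter (fun a => ¬ ∀ e ∈ E, ¬ G.Adj a e) ⊆ A \ T := by
      intro a ha
      rw [Finset.mem_filter] at ha
      obtain ⟨haA, hnot⟩ := ha
      push_neg at hnot
      obtain ⟨e, heE, hadj⟩ := hnot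
      refine Finset.mem_sdiff.mpr ⟨haA, fun haT => ?_⟩
      exact hTind a (Finset.mem_coe.mpr haT) e (Finset.mem_coe.mpr (hET heE)) hadj
    have hbadcard : (A.filter (fun a => ¬ ∀ e ∈ E, ¬ G.Adj a e)).card ≤ (A \ T).card :=
      Finset.card_le_card hbad
    -- recursion
    have hssub : B \ E ⊂ B := by
      refine Finset.ssubset_iff_of_subset (Finset.sdiff_subset) |>.mpr ?_
      exact ⟨b₀, hb₀B, fun hc => (Finset.mem_sdiff.mp hc).2 hb₀E⟩
    have hrec : A'.card ≤ (B \ E).card := by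
      refine ih (B \ E) hssub A' (isIndep_mono G hA ?_) ?_ ?_ ?_
      · intro x hx
        exact Finset.mem_coe.mpr (Finset.mem_of_mem_filter _ (Finset.mem_coe.mp hx))
      · exact hdisj.mono (Finset.filter_subset _ _) (Finset.sdiff_subset)
      · intro a ha
        exact hne a (Finset.mem_of_mem_filter _ ha)
      · intro a ha
        rw [Finset.mem_filter] at ha
        obtain ⟨haA, hdisjE⟩ := ha
        intro x hx
        refine Finset.mem_sdiff.mpr ⟨hsub a haA hx, fun hxE => ?_⟩
        exact hdisjE x hxE ((SimpleGraph.mem_neighborFinset G a x).mp hx)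
    have hBE : (B \ E).card + E.card = B.card := Finset.card_sdiff_add_card_eq_card hEB
    omega

end Aux

/-- Remark 2.2 of [GV2]. A very well-covered graph — one with no
isolated vertices in which every maximal independent set has cardinality `|V(G)|/2` —
has a perfect matching. -/


theorem veryWellCovered_perfectMatching {V : Type*} [Fintype V] [DecidableEq V]
    (G : SimpleGraph V) (hiso : NoIsolated G)
    (hvwc : ∀ S : Finset V, IsMaxIndep G ↑S → 2 * S.card = Fintype.card V) :
    ∃ M : SimpleGraph.Subgraph G, M.IsPerfectMatching := by
  classical
  letI : DecidableRel G.Adj := Classical.decRel _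
  obtain ⟨Sf, -, hSmax⟩ := exists_maxIndep_superset G ∅ (by intro u hu; simp at hu)
  have hSind : IsIndep G ↑Sf := hSmax.1
  have hScard : 2 * Sf.card = Fintype.card V := hvwc Sf hSmax
  -- Hall's condition
  have hHall : ∀ s : Finset {x // x ∈ Sf},
      s.card ≤ (s.biUnion fun x => G.neighborFinset ↑x).card := by
    intro s
    set A := s.image (fun x : {x // x ∈ Sf} => (x : V)) with hAdef
    have hAcard : A.card = s.card := Finset.card_image_of_injective _ Subtype.val_injective
    have hbi : (s.biUnion fun x => G.neighborFinset ↑x)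
        = A.biUnion (fun a => G.neighborFinset a) := by
      rw [hAdef, Finset.image_biUnion]
    have hAS : ∀ a ∈ A, a ∈ Sf := by
      intro a ha
      rw [hAdef, Finset.mem_image] at ha
      obtain ⟨x, -, rfl⟩ := ha
      exact x.2
    have hAind : IsIndep G ↑A := by
      intro u hu v hv
      exact hSind u (Finset.mem_coe.mpr (hAS u (Finset.mem_coe.mp hu)))
        v (Finset.mem_coe.mpr (hAS v (Finset.mem_coe.mp hv)))
    have hdisj : Disjoint A (A.biUnion fun a => G.neighborFinset a) := by
      rw [Finset.disjoint_left]
      intro a ha hmem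
      rw [Finset.mem_biUnion] at hmem
      obtain ⟨a', ha', hadj⟩ := hmem
      exact hAind a' (Finset.mem_coe.mpr ha') a (Finset.mem_coe.mpr ha)
        ((SimpleGraph.mem_neighborFinset G a' a).mp hadj)
    have hne : ∀ a ∈ A, (G.neighborFinset a).Nonempty := by
      intro a _
      obtain ⟨w, hw⟩ := hiso a
      exact ⟨w, (SimpleGraph.mem_neighborFinset G a w).mpr hw⟩
    have hkey := key_card_le G hvwc (A.biUnion fun a => G.neighborFinset a) A hAind hdisj hne
      (fun a ha => Finset.subset_biUnion_of_mem (fun a => G.neighborFinset a) ha)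
    rw [hbi]
    omega
  obtain ⟨f, hfinj, hfmem⟩ :=
    (Finset.all_card_le_biUnion_card_iff_exists_injective
      (fun x : {x // x ∈ Sf} => G.neighborFinset ↑x)).mp hHall
  have hfadj : ∀ x : {x // x ∈ Sf}, G.Adj ↑x (f x) := by
    intro x
    have := hfmem x
    rwa [SimpleGraph.mem_neighborFinset] at this
  have hfnotS : ∀ x, f x ∉ Sf := by
    intro x hx
    exact hSind ↑x (Finset.mem_coe.mpr x.2) (f x) (Finset.mem_coe.mpr hx) (hfadj x)
  -- the image of f is exactly the complement of Sf
  have himsub : (Finset.univ.image f) ⊆ Sfᶜ := by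
    intro v hv
    rw [Finset.mem_image] at hv
    obtain ⟨x, -, rfl⟩ := hv
    exact Finset.mem_compl.mpr (hfnotS x)
  have himcard : ((Finset.univ : Finset {x // x ∈ Sf}).image f).card = Sf.card := by
    rw [Finset.card_image_of_injective _ hfinj, Finset.card_univ, Fintype.card_coe]
  have hcompl : (Finset.univ.image f) = Sfᶜ := by
    refine Finset.eq_of_subset_of_card_le himsub ?_
    rw [Finset.card_compl, himcard]
    omega
  have hsurj : ∀ v : V, v ∉ Sf → ∃ x, f x = v := by
    intro v hv
    have hvmem : v ∈ (Finset.univ.image f) := by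
      rw [hcompl]; exact Finset.mem_compl.mpr hv
    rw [Finset.mem_image] at hvmem
    obtain ⟨x, -, hx⟩ := hvmem
    exact ⟨x, hx⟩
  -- build the perfect matching
  refine ⟨⟨Set.univ,
    fun u v => (∃ h : u ∈ Sf, f ⟨u, h⟩ = v) ∨ (∃ h : v ∈ Sf, f ⟨v, h⟩ = u),
    ?_, fun {v w} _ => Set.mem_univ v, ⟨fun v w h => h.symm⟩⟩, ?_, fun v => Set.mem_univ v⟩
  · rintro v w (⟨h, rfl⟩ | ⟨h, rfl⟩)
    · exact hfadj ⟨v, h⟩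
    · exact (hfadj ⟨w, h⟩).symm
  · intro v _
    by_cases hv : v ∈ Sf
    · refine ⟨f ⟨v, hv⟩, Or.inl ⟨hv, rfl⟩, ?_⟩
      rintro y (⟨h, rfl⟩ | ⟨h, hy⟩)
      · rfl
      · rw [← hy] at hv
        exact (hfnotS ⟨y, h⟩ hv).elim
    · obtain ⟨x, hx⟩ := hsurj v hv
      refine ⟨(x : V), Or.inr ⟨x.2, ?_⟩, ?_⟩
      · exact hx
      · rintro y (⟨h, rfl⟩ | ⟨h, hy⟩)
        · exact (hv h).elim
        · have : (⟨y, h⟩ : {x // x ∈ Sf}) = x := hfinj (hy.trans hx.symm)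
          exact congrArg Subtype.val this
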